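/- Let A be a complete normed ring with unit 1, let R : ℝ → A be Bochner measurable and β : ℝ → ℝ integrable on ℝ with ‖R(τ)‖ ≤ β(τ) for almost every τ. Then for all real s ≤ t the Dyson series Σ_{k≥1} i^k ∫_s^t R(t₁)∫_s^{t₁} R(t₂) ⋯ ∫_s^{t_{k−1}} R(t_k) dt_k ⋯ dt₁ is absolutely convergent (summable in norm) in A. -/

import Mathlib

open MeasureTheory intervalIntegral Filter Topology

/-- The `k`-fold time-ordered iterated Bochner integral
`∫_s^t R(t₁) (∫_s^{t₁} R(t₂) ( ⋯ (∫_s^{t_{k−1}} R(t_k) dt_k) ⋯ ) dt₂) dt₁`. -/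
noncomputable def timeOrderedIntegral {A : Type*} [NormedRing A] [NormedSpace ℝ A]
    (f : ℝ → A) (s : ℝ) : ℕ → ℝ → A
  | 0, _ => 1
  | k + 1, t => ∫ τ in s..t, f τ * timeOrderedIntegral f s k τ

open Set


section Aux

lemma stieltjes_eq_of_continuous {f : ℝ → ℝ} (hf : Monotone f) (hc : Continuous f) (x : ℝ) :
    hf.stieltjesFunction x = f x := by
  rw [hf.stieltjesFunction_eq]
  exact rightLim_eq_of_tendsto (h := nhdsGT_neBot x)
    ((hc.tendsto x).mono_left nhdsWithin_le_nhds)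

variable {g : ℝ → ℝ} {s : ℝ}

lemma primitive_monotone (hgi : Integrable g (volume : Measure ℝ)) (hg0 : ∀ x, 0 ≤ g x) :
    Monotone (fun τ => ∫ u in s..τ, g u) := by
  intro a b hab
  have h := intervalIntegral.integral_add_adjacent_intervals
    (hgi.intervalIntegrable (a := s) (b := a)) (hgi.intervalIntegrable (a := a) (b := b))
  have h2 : 0 ≤ ∫ u in a..b, g u :=
    intervalIntegral.integral_nonneg hab (fun u _ => hg0 u)
  simp only [← h]
  linarith

lemma primitive_eq_zero (hgs : ∀ x ≤ s, g x = 0) {τ : ℝ} (hτ : τ ≤ s) :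
    ∫ u in s..τ, g u = 0 := by
  rw [intervalIntegral.integral_symm]
  have : ∫ u in τ..s, g u = ∫ u in τ..s, (0 : ℝ) := by
    apply intervalIntegral.integral_congr
    intro u hu
    rw [uIcc_of_le hτ] at hu
    exact hgs u hu.2
  simp [this]

lemma primitive_nonneg (hg0 : ∀ x, 0 ≤ g x) (hgs : ∀ x ≤ s, g x = 0) (τ : ℝ) :
    0 ≤ ∫ u in s..τ, g u := by
  rcases le_total s τ with h | h
  · exact intervalIntegral.integral_nonneg h (fun u _ => hg0 u)
  · rw [primitive_eq_zero hgs h]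

lemma primitive_ae_hasDerivAt (hgm : Measurable g) (hgi : Integrable g (volume : Measure ℝ))
    (hg0 : ∀ x, 0 ≤ g x) :
    ∀ᵐ x ∂(volume : Measure ℝ), HasDerivAt (fun τ => ∫ u in s..τ, g u) (g x) x := by
  set F : ℝ → ℝ := fun τ => ∫ u in s..τ, g u with hF
  have hFmono : Monotone F := primitive_monotone hgi hg0
  have hFcont : Continuous F := hgi.continuous_primitive s
  have hmeas : hFmono.stieltjesFunction.measure
      = (volume : Measure ℝ).withDensity (fun x => ENNReal.ofReal (g x)) := by
    refine Measure.ext_of_Ioc _ _ (fun a b hab => ?_)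
    rw [StieltjesFunction.measure_Ioc, stieltjes_eq_of_continuous hFmono hFcont,
      stieltjes_eq_of_continuous hFmono hFcont,
      withDensity_apply _ measurableSet_Ioc]
    have hFab : F b - F a = ∫ u in a..b, g u := by
      have h := intervalIntegral.integral_add_adjacent_intervals
        (hgi.intervalIntegrable (a := s) (b := a)) (hgi.intervalIntegrable (a := a) (b := b))
      simp only [hF, ← h]; ring
    rw [hFab, intervalIntegral.integral_of_le hab.le,
      ofReal_integral_eq_lintegral_ofReal (hgi.restrict) (ae_of_all _ (fun x => hg0 x))]
  filter_upwards [hFmono.ae_hasDerivAt,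
    Measure.rnDeriv_withDensity (volume : Measure ℝ) (hgm.ennreal_ofReal)] with x hx hrn
  rw [hmeas, hrn, ENNReal.toReal_ofReal (hg0 x)] at hx
  exact hx

/-- Key integral inequality. -/
lemma primitive_pow_integral_le (hgm : Measurable g) (hgi : Integrable g (volume : Measure ℝ))
    (hg0 : ∀ x, 0 ≤ g x) (hgs : ∀ x ≤ s, g x = 0) (k : ℕ) {t : ℝ} (hst : s ≤ t) :
    ∫ τ in s..t, g τ * (∫ u in s..τ, g u) ^ k
      ≤ (∫ u in s..t, g u) ^ (k + 1) / (k + 1) := by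
  set F : ℝ → ℝ := fun τ => ∫ u in s..τ, g u with hF
  have hFmono : Monotone F := primitive_monotone hgi hg0
  have hFcont : Continuous F := hgi.continuous_primitive s
  have hF0 : ∀ τ, 0 ≤ F τ := primitive_nonneg hg0 hgs
  have hF' : ∀ᵐ x ∂(volume : Measure ℝ), HasDerivAt F (g x) x :=
    primitive_ae_hasDerivAt hgm hgi hg0
  set G : ℝ → ℝ := fun τ => F τ ^ (k + 1) / (k + 1) with hG
  have hGmono : Monotone G := by
    intro a b hab
    have := hF0 a
    have := hFmono hab
    simp only [hG]
    gcongr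
  have hGcont : Continuous G := (hFcont.pow _).div_const _
  have hG' : ∀ᵐ x ∂(volume : Measure ℝ), HasDerivAt G (g x * F x ^ k) x := by
    filter_upwards [hF'] with x hx
    have h := (hx.pow (k + 1)).div_const ((k : ℝ) + 1)
    have hne : ((k : ℝ) + 1) ≠ 0 := by positivity
    refine HasDerivAt.congr_deriv h ?_
    rw [div_eq_iff hne, Nat.add_sub_cancel]
    push_cast
    ring
  have hrnG : ∀ᵐ x ∂(volume : Measure ℝ),
      (hGmono.stieltjesFunction.measure.rnDeriv volume x).toReal = g x * F x ^ k := by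
    filter_upwards [hGmono.ae_hasDerivAt, hG'] with x h1 h2 using h1.unique h2
  have hGsm : hGmono.stieltjesFunction.measure (Ioc s t) = ENNReal.ofReal (G t - G s) := by
    rw [StieltjesFunction.measure_Ioc, stieltjes_eq_of_continuous hGmono hGcont,
      stieltjes_eq_of_continuous hGmono hGcont]
  have hGs : G s = 0 := by
    simp [hG, hF, intervalIntegral.integral_same]
  calc ∫ τ in s..t, g τ * F τ ^ k
      = ∫ τ in Ioc s t, g τ * F τ ^ k := intervalIntegral.integral_of_le hst
    _ = ∫ τ in Ioc s t, (hGmono.stieltjesFunction.measure.rnDeriv volume τ).toReal :=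
        (integral_congr_ae (ae_restrict_of_ae (hrnG.mono fun x h => h.symm))).symm ▸ rfl
    _ ≤ (hGmono.stieltjesFunction.measure (Ioc s t)).toReal := by
        apply Measure.setIntegral_toReal_rnDeriv_le
        rw [hGsm]; exact ENNReal.ofReal_ne_top
    _ ≤ G t - G s := by
        rw [hGsm]
        rw [ENNReal.toReal_ofReal (sub_nonneg.2 (hGmono hst))]
    _ = F t ^ (k + 1) / (k + 1) := by rw [hGs]; ring

end Aux


theorem dyson_series_summable
    {A : Type*} [NormedRing A] [NormedAlgebra ℂ A] [CompleteSpace A]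
    (R : ℝ → A) (β : ℝ → ℝ)
    (hR : AEStronglyMeasurable R (volume : Measure ℝ))
    (hβ : Integrable β (volume : Measure ℝ))
    (hRβ : ∀ᵐ τ ∂(volume : Measure ℝ), ‖R τ‖ ≤ β τ)
    (s t : ℝ) (hst : s ≤ t) :
    Summable fun k : ℕ =>
      ‖(Complex.I ^ (k + 1)) • timeOrderedIntegral R s (k + 1) t‖ := by
  classical
  set β' : ℝ → ℝ := hβ.aestronglyMeasurable.mk β with hβ'
  have hβeq : β =ᵐ[volume] β' := hβ.aestronglyMeasurable.ae_eq_mk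
  set g : ℝ → ℝ := (Ioi s).indicator (fun x => |β' x|) with hg
  have hgm : Measurable g :=
    (hβ.aestronglyMeasurable.stronglyMeasurable_mk.measurable.abs).indicator measurableSet_Ioi
  have hgi : Integrable g (volume : Measure ℝ) :=
    ((hβ.congr hβeq).abs).indicator measurableSet_Ioi
  have hg0 : ∀ x, 0 ≤ g x := by
    intro x
    rw [hg]
    by_cases h : x ∈ Ioi s
    · rw [indicator_of_mem h]; positivity
    · rw [indicator_of_notMem h]
  have hgs : ∀ x ≤ s, g x = 0 := fun x hx =>
    indicator_of_notMem (by simpa using hx) _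
  have hRg : ∀ᵐ τ ∂(volume : Measure ℝ), s < τ → ‖R τ‖ ≤ g τ := by
    filter_upwards [hRβ, hβeq] with τ h1 h2 hτ
    have hgτ : g τ = |β' τ| := indicator_of_mem hτ _
    rw [hgτ]
    calc ‖R τ‖ ≤ β τ := h1
      _ = β' τ := h2
      _ ≤ |β' τ| := le_abs_self _
  have hRint : Integrable R (volume : Measure ℝ) := by
    refine Integrable.mono' (hβ.congr hβeq).abs hR ?_
    filter_upwards [hRβ, hβeq] with τ h1 h2
    calc ‖R τ‖ ≤ β τ := h1
      _ = β' τ := h2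
      _ ≤ |β' τ| := le_abs_self _
  set F : ℝ → ℝ := fun τ => ∫ u in s..τ, g u with hF
  have hF0 : ∀ τ, 0 ≤ F τ := primitive_nonneg hg0 hgs
  set C : ℝ := ‖(1 : A)‖ with hC
  have hC0 : 0 ≤ C := norm_nonneg _
  -- main induction
  have main : ∀ k : ℕ, Continuous (timeOrderedIntegral R s k) ∧
      ∀ τ, s ≤ τ → ‖timeOrderedIntegral R s k τ‖ ≤ C * (F τ ^ k / k.factorial) := by
    intro k
    induction k with
    | zero =>
      constructor
      · show Continuous fun _ : ℝ => (1 : A)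
        exact continuous_const
      · intro τ _
        show ‖(1 : A)‖ ≤ _
        simp [hC]
    | succ k ih =>
      obtain ⟨ihc, ihb⟩ := ih
      have hTint : ∀ a b : ℝ,
          IntervalIntegrable (fun u => R u * timeOrderedIntegral R s k u) volume a b :=
        fun a b => (hRint.intervalIntegrable).mul_continuousOn ihc.continuousOn
      constructor
      · show Continuous fun τ : ℝ => ∫ u in s..τ, R u * timeOrderedIntegral R s k u
        exact intervalIntegral.continuous_primitive hTint s
      · intro τ hτ
        have hbcont : Continuous fun u => C * (F u ^ k / (k.factorial : ℝ)) := by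
          exact continuous_const.mul (((hgi.continuous_primitive s).pow k).div_const _)
        have hbound : IntervalIntegrable
            (fun u => g u * (C * (F u ^ k / (k.factorial : ℝ)))) volume s τ :=
          hgi.intervalIntegrable.mul_continuousOn hbcont.continuousOn
        have h1 : ‖∫ u in s..τ, R u * timeOrderedIntegral R s k u‖
            ≤ |∫ u in s..τ, g u * (C * (F u ^ k / (k.factorial : ℝ)))| := by
          refine intervalIntegral.norm_integral_le_abs_of_norm_le ?_ hbound
          rw [uIoc_of_le hτ]
          filter_upwards [ae_restrict_mem measurableSet_Ioc, ae_restrict_of_ae hRg]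
            with u hu hgu
          calc ‖R u * timeOrderedIntegral R s k u‖
              ≤ ‖R u‖ * ‖timeOrderedIntegral R s k u‖ := norm_mul_le _ _
            _ ≤ g u * (C * (F u ^ k / (k.factorial : ℝ))) :=
                mul_le_mul (hgu hu.1) (ihb u hu.1.le) (norm_nonneg _) (hg0 u)
        have h2 : ∫ u in s..τ, g u * (C * (F u ^ k / (k.factorial : ℝ)))
            = (C / (k.factorial : ℝ)) * ∫ u in s..τ, g u * F u ^ k := by
          rw [← intervalIntegral.integral_const_mul]
          apply intervalIntegral.integral_congr
          intro u _
          ring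
        have h3 : ∫ u in s..τ, g u * F u ^ k ≤ F τ ^ (k + 1) / (k + 1) :=
          primitive_pow_integral_le hgm hgi hg0 hgs k hτ
        have h4 : 0 ≤ ∫ u in s..τ, g u * F u ^ k := by
          apply intervalIntegral.integral_nonneg hτ
          intro u _
          exact mul_nonneg (hg0 u) (pow_nonneg (hF0 u) k)
        show ‖∫ u in s..τ, R u * timeOrderedIntegral R s k u‖ ≤ _
        refine h1.trans ?_
        rw [h2, abs_of_nonneg (by positivity)]
        calc (C / (k.factorial : ℝ)) * ∫ u in s..τ, g u * F u ^ k
            ≤ (C / (k.factorial : ℝ)) * (F τ ^ (k + 1) / (k + 1)) := by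
              gcongr
          _ = C * (F τ ^ (k + 1) / ((k + 1).factorial : ℝ)) := by
              have hk : (k.factorial : ℝ) ≠ 0 := Nat.cast_ne_zero.2 k.factorial_ne_zero
              have hk1 : ((k : ℝ) + 1) ≠ 0 := by positivity
              rw [Nat.factorial_succ]
              push_cast
              rw [div_mul_div_comm, mul_div_assoc', mul_comm ((k : ℝ) + 1) (k.factorial : ℝ)]
  -- conclude
  have hsum : Summable (fun k : ℕ => C * (F t ^ (k + 1) / ((k + 1).factorial : ℝ))) := by
    have h := Real.summable_pow_div_factorial (F t)
    exact ((summable_nat_add_iff 1).2 h).mul_left C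
  refine Summable.of_nonneg_of_le (fun k => norm_nonneg _) (fun k => ?_) hsum
  rw [norm_smul]
  have : ‖Complex.I ^ (k + 1)‖ = 1 := by
    rw [norm_pow, Complex.norm_I, one_pow]
  rw [this, one_mul]
  exact (main (k + 1)).2 t hst
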